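/- arXiv:1602.05149 — 3 statements merged into one kernel-verified Lean document; each statement's English description precedes it below -/
import Mathlib

section
/- Let λ₁, ..., λ_m : ℝ → ℝ be continuously differentiable functions on a compact interval. Then the set of points where Λ(x) = max_{i=1,...,m} λ_i(x) fails to be differentiable is countable. -/
open Filter Set Topology Asymptotics

/-- Max of two functions with the same value and the same derivative at a point
is differentiable there. -/
lemma max_hasDerivAt {f g : ℝ → ℝ} {c x : ℝ} (hf : HasDerivAt f c x)
    (hg : HasDerivAt g c x) (hfg : f x = g x) :
    HasDerivAt (fun y => max (f y) (g y)) c x := by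
  rw [hasDerivAt_iff_isLittleO] at hf hg ⊢
  have hO : (fun y => max (f y) (g y) - max (f x) (g x) - (y - x) • c) =O[𝓝 x]
      (fun y => ‖f y - f x - (y - x) • c‖ + ‖g y - g x - (y - x) • c‖) := by
    apply Asymptotics.isBigO_of_le
    intro y
    have h1 : max (f y) (g y) - max (f x) (g x) - (y - x) • c
        = max (f y - f x - (y - x) • c) (g y - g x - (y - x) • c) := by
      rw [hfg, max_self, ← max_sub_sub_right, ← max_sub_sub_right, ← hfg]
    rw [h1]
    set p := f y - f x - (y - x) • c
    set q := g y - g x - (y - x) • c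
    calc ‖max p q‖ = |max p q| := Real.norm_eq_abs _
      _ ≤ |p| + |q| := by
          rcases le_total p q with h | h
          · rw [max_eq_right h]; exact le_add_of_nonneg_left (abs_nonneg p)
          · rw [max_eq_left h]; exact le_add_of_nonneg_right (abs_nonneg q)
      _ = ‖|p| + |q|‖ := (Real.norm_of_nonneg (by positivity)).symm
      _ = ‖‖p‖ + ‖q‖‖ := by rw [Real.norm_eq_abs p, Real.norm_eq_abs q]
  exact hO.trans_isLittleO (hf.norm_left.add hg.norm_left)

/-- Finite maxima of differentiable functions with "matching derivatives at ties"
are differentiable. -/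
lemma sup'_hasDerivAt {n : ℕ} (lam : Fin n → ℝ → ℝ) (x : ℝ)
    (hd : ∀ i, DifferentiableAt ℝ (lam i) x)
    (H : ∀ i j, lam i x = lam j x → deriv (lam i) x = deriv (lam j) x)
    (s : Finset (Fin n)) (hs : s.Nonempty) :
    ∃ i ∈ s, (s.sup' hs fun j => lam j x) = lam i x ∧
      HasDerivAt (fun y => s.sup' hs (fun j => lam j y)) (deriv (lam i) x) x := by
  induction hs using Finset.Nonempty.cons_induction with
  | singleton a =>
    refine ⟨a, Finset.mem_singleton_self a, by simp, ?_⟩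
    simpa using (hd a).hasDerivAt
  | cons a s ha hs ih =>
    obtain ⟨i, hi, hachieve, hder⟩ := ih
    set F : ℝ → ℝ := fun y => s.sup' hs fun j => lam j y with hF
    have hcons : ∀ y, ((Finset.cons a s ha).sup' (s.cons_nonempty ha) fun j => lam j y)
        = max (lam a y) (F y) := fun y => by
      rw [Finset.sup'_cons hs]
    have hconta : ContinuousAt (lam a) x := (hd a).continuousAt
    have hcontF : ContinuousAt F x := hder.continuousAt
    rcases lt_trichotomy (lam a x) (F x) with hlt | heq | hgt
    · refine ⟨i, Finset.mem_cons.2 (Or.inr hi), ?_, ?_⟩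
      · rw [hcons, max_eq_right hlt.le]; exact hachieve
      · refine hder.congr_of_eventuallyEq ?_
        filter_upwards [hconta.eventually_lt hcontF hlt] with y hy
        rw [hcons y, max_eq_right hy.le]
    · refine ⟨i, Finset.mem_cons.2 (Or.inr hi), ?_, ?_⟩
      · rw [hcons, max_eq_right heq.le]; exact hachieve
      · have e : deriv (lam a) x = deriv (lam i) x := H a i (heq.trans hachieve)
        have hda : HasDerivAt (lam a) (deriv (lam i) x) x := by
          have h' := (hd a).hasDerivAt; rwa [e] at h'
        have hmax := max_hasDerivAt hda hder heq
        exact hmax.congr_of_eventuallyEq (Eventually.of_forall fun y => hcons y)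
    · refine ⟨a, Finset.mem_cons.2 (Or.inl rfl), ?_, ?_⟩
      · rw [hcons, max_eq_left hgt.le]
      · refine ((hd a).hasDerivAt).congr_of_eventuallyEq ?_
        filter_upwards [hcontF.eventually_lt hconta hgt] with y hy
        rw [hcons y, max_eq_left hy.le]

/-- Points where two C¹ functions agree but their derivatives differ are isolated,
hence countable. -/
lemma countable_bad {f g : ℝ → ℝ} {a b : ℝ}
    (hf : ∀ x ∈ Set.Ioo a b, DifferentiableAt ℝ f x)
    (hg : ∀ x ∈ Set.Ioo a b, DifferentiableAt ℝ g x) :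
    Set.Countable {x | x ∈ Set.Ioo a b ∧ f x = g x ∧ deriv f x ≠ deriv g x} := by
  set B := {x | x ∈ Set.Ioo a b ∧ f x = g x ∧ deriv f x ≠ deriv g x} with hB
  rw [← Set.countable_coe_iff]
  haveI hdisc : DiscreteTopology B := by
    rw [discreteTopology_subtype_iff]
    intro x hx
    obtain ⟨hxI, hfg, hne⟩ := hx
    have hder : HasDerivAt (fun y => f y - g y) (deriv f x - deriv g x) x :=
      ((hf x hxI).hasDerivAt.sub (hg x hxI).hasDerivAt)
    rw [hasDerivAt_iff_tendsto_slope] at hder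
    have hslope : ∀ᶠ y in 𝓝[≠] x, slope (fun y => f y - g y) x y ≠ 0 :=
      hder.eventually_ne (sub_ne_zero.2 hne)
    have h1 : ∀ᶠ y in 𝓝[≠] x ⊓ 𝓟 B, slope (fun y => f y - g y) x y ≠ 0 :=
      hslope.filter_mono inf_le_left
    have h2 : ∀ᶠ y in 𝓝[≠] x ⊓ 𝓟 B, y ∈ B :=
      Filter.eventually_inf_principal.mpr (Eventually.of_forall fun y h => h)
    have hF : ∀ᶠ y in 𝓝[≠] x ⊓ 𝓟 B, False := by
      filter_upwards [h1, h2] with y hy1 hy2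
      obtain ⟨_, hfg', _⟩ := hy2
      exact hy1 (by simp [slope_def_field, sub_eq_zero.2 hfg', sub_eq_zero.2 hfg])
    exact Filter.eventually_false_iff_eq_bot.mp hF
  exact TopologicalSpace.separableSpace_iff_countable.mp inferInstance

/-- The pointwise maximum of finitely many C¹ functions on a compact interval
fails to be differentiable only on a countable set. -/
theorem stmt1 (m : ℕ) (lam : Fin (m + 1) → ℝ → ℝ) (a b : ℝ)
    (hC1 : ∀ i, ContDiffOn ℝ 1 (lam i) (Set.Icc a b)) :
    Set.Countable {x ∈ Set.Icc a b |
      ¬ DifferentiableAt ℝ (fun y => ⨆ i, lam i y) x} := by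
  have hdiff : ∀ i, ∀ x ∈ Set.Ioo a b, DifferentiableAt ℝ (lam i) x := by
    intro i x hx
    exact ((hC1 i).differentiableOn one_ne_zero x (Set.Ioo_subset_Icc_self hx)).differentiableAt
      (Icc_mem_nhds hx.1 hx.2)
  set B : Fin (m+1) → Fin (m+1) → Set ℝ := fun i j =>
    {x | x ∈ Set.Ioo a b ∧ lam i x = lam j x ∧ deriv (lam i) x ≠ deriv (lam j) x} with hBdef
  have hcount : ∀ i j, (B i j).Countable := fun i j =>
    countable_bad (hdiff i) (hdiff j)
  have hsub : {x ∈ Set.Icc a b | ¬ DifferentiableAt ℝ (fun y => ⨆ i, lam i y) x}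
      ⊆ ({a} ∪ {b}) ∪ ⋃ i, ⋃ j, B i j := by
    rintro x ⟨hx, hnd⟩
    by_cases hxa : x = a
    · exact Or.inl (Or.inl hxa)
    by_cases hxb : x = b
    · exact Or.inl (Or.inr hxb)
    have hxI : x ∈ Set.Ioo a b :=
      ⟨lt_of_le_of_ne hx.1 (Ne.symm hxa), lt_of_le_of_ne hx.2 hxb⟩
    right
    by_contra hB
    apply hnd
    have H : ∀ i j, lam i x = lam j x → deriv (lam i) x = deriv (lam j) x := by
      intro i j hij
      by_contra hne
      exact hB (Set.mem_iUnion.2 ⟨i, Set.mem_iUnion.2 ⟨j, hxI, hij, hne⟩⟩)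
    obtain ⟨i, -, -, hder⟩ := sup'_hasDerivAt lam x (fun i => hdiff i x hxI) H
      Finset.univ Finset.univ_nonempty
    have hfun : (fun y => ⨆ i, lam i y)
        = fun y => Finset.univ.sup' Finset.univ_nonempty (fun j => lam j y) := by
      funext y
      rw [Finset.sup'_univ_eq_ciSup]
    rw [hfun]
    exact hder.differentiableAt
  exact Set.Countable.mono hsub
    ((((Set.countable_singleton a).union (Set.countable_singleton b))).union
      (Set.countable_iUnion fun i => Set.countable_iUnion fun j => hcount i j))
end

section
/- Let λ₁, ..., λ_m : ℝ → ℝ be differentiable at x and suppose Λ(x) = max_i λ_i(x) is not differentiable at x. Then there exist indices i ≠ j, both attaining the maximum at x, such that max(λ_i, λ_j) is not differentiable at x. -/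
open Filter Asymptotics

/-- If `f` and `g` are differentiable at `x`, agree at `x`, and their pointwise
max is differentiable at `x`, then their derivatives at `x` agree. -/
lemma aux_deriv_eq (f g : ℝ → ℝ) (x : ℝ) (hf : DifferentiableAt ℝ f x)
    (hg : DifferentiableAt ℝ g x) (hfg : f x = g x)
    (hmax : DifferentiableAt ℝ (fun y => max (f y) (g y)) x) :
    deriv f x = deriv g x := by
  have habs : DifferentiableAt ℝ (fun y => |g y - f y|) x := by
    have heq : (fun y => |g y - f y|) = fun y => 2 * max (f y) (g y) - f y - g y := by
      funext y
      rcases le_total (f y) (g y) with h | h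
      · rw [max_eq_right h, abs_of_nonneg (by linarith)]; ring
      · rw [max_eq_left h, abs_of_nonpos (by linarith)]; ring
    rw [heq]
    exact ((hmax.const_mul 2).sub hf).sub hg
  have hu : DifferentiableAt ℝ (fun y => g y - f y) x := hg.sub hf
  have hminus : deriv (fun y => |g y - f y| - (g y - f y)) x = 0 := by
    apply IsLocalMin.deriv_eq_zero
    apply Filter.Eventually.of_forall
    intro y
    simp only [hfg, sub_self, abs_zero]
    have := le_abs_self (g y - f y)
    linarith
  have hplus : deriv (fun y => |g y - f y| + (g y - f y)) x = 0 := by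
    apply IsLocalMin.deriv_eq_zero
    apply Filter.Eventually.of_forall
    intro y
    simp only [hfg, sub_self, abs_zero]
    have := neg_abs_le (g y - f y)
    linarith
  rw [deriv_fun_sub habs hu] at hminus
  rw [deriv_fun_add habs hu] at hplus
  have hu0 : deriv (fun y => g y - f y) x = 0 := by linarith
  rw [deriv_fun_sub hg hf] at hu0
  linarith

/-- If each `λ_i` is differentiable at `x` but the pointwise maximum
`Λ = max_i λ_i` is not, then there are two distinct indices `i ≠ j`, both
attaining the maximum at `x`, such that `max(λ_i, λ_j)` is not
differentiable at `x`. -/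
theorem stmt3 (m : ℕ) (lam : Fin (m + 1) → ℝ → ℝ) (x : ℝ)
    (hdiff : ∀ i, DifferentiableAt ℝ (lam i) x)
    (hΛ : ¬ DifferentiableAt ℝ (fun y => ⨆ i, lam i y) x) :
    ∃ i j : Fin (m + 1), i ≠ j ∧
      lam i x = ⨆ k, lam k x ∧ lam j x = ⨆ k, lam k x ∧
      ¬ DifferentiableAt ℝ (fun y => max (lam i y) (lam j y)) x := by
  by_contra hcon
  push_neg at hcon
  set M : ℝ := ⨆ k, lam k x with hM
  obtain ⟨i0, hi0⟩ : ∃ i, lam i x = ⨆ k, lam k x := exists_eq_ciSup_of_finite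
  set S : Finset (Fin (m + 1)) := Finset.univ.filter (fun i => lam i x = M) with hSdef
  have hmemS : ∀ i, i ∈ S ↔ lam i x = M := by
    intro i; simp [hSdef]
  have hSne : S.Nonempty := ⟨i0, (hmemS i0).2 hi0⟩
  -- eventually, the sup over all indices equals the sup over S
  have hkey : ∀ᶠ y in nhds x, ∀ i ∉ S, lam i y < lam i0 y := by
    rw [Filter.eventually_all]
    intro i
    by_cases hi : i ∈ S
    · simp [hi]
    · filter_upwards [ContinuousAt.eventually_lt (hdiff i).continuousAt
        (hdiff i0).continuousAt (by
          have h1 : lam i x ≤ M := le_ciSup (f := fun k => lam k x) (Set.Finite.bddAbove (Set.finite_range _)) i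
          have h2 : lam i x ≠ M := fun h => hi ((hmemS i).2 h)
          rw [hi0]; exact lt_of_le_of_ne h1 h2)] with y hy
      intro _
      exact hy
  have heqv : (fun y => ⨆ i, lam i y) =ᶠ[nhds x]
      (fun y => S.sup' hSne (fun i => lam i y)) := by
    filter_upwards [hkey] with y hy
    rw [← Finset.sup'_univ_eq_ciSup]
    apply le_antisymm
    · apply Finset.sup'_le
      intro i _
      by_cases hi : i ∈ S
      · exact Finset.le_sup' (fun i => lam i y) hi
      · exact le_of_lt (lt_of_lt_of_le (hy i hi)
          (Finset.le_sup' (fun i => lam i y) ((hmemS i0).2 hi0)))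
    · exact Finset.sup'_mono _ (Finset.subset_univ S) hSne
  -- all maximizers have the same derivative c
  set c : ℝ := deriv (lam i0) x with hc
  have hderivS : ∀ i ∈ S, HasDerivAt (lam i) c x := by
    intro i hi
    rcases eq_or_ne i i0 with rfl | hne
    · exact (hdiff i).hasDerivAt
    · have hmax : DifferentiableAt ℝ (fun y => max (lam i0 y) (lam i y)) x :=
        hcon i0 i hne.symm hi0 ((hmemS i).1 hi)
      have heq := aux_deriv_eq (lam i0) (lam i) x (hdiff i0) (hdiff i)
        (by rw [hi0, (hmemS i).1 hi]) hmax
      show HasDerivAt (lam i) (deriv (lam i0) x) x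
      rw [heq]
      exact (hdiff i).hasDerivAt
  -- the sup over S has derivative c at x
  have hsup'x : S.sup' hSne (fun i => lam i x) = M := by
    apply le_antisymm
    · exact Finset.sup'_le _ _ fun i hi => le_of_eq ((hmemS i).1 hi)
    · calc M = lam i0 x := by rw [hM, ← hi0]
        _ ≤ _ := Finset.le_sup' (fun i => lam i x) ((hmemS i0).2 hi0)
  have hhas : HasDerivAt (fun y => S.sup' hSne (fun i => lam i y)) c x := by
    rw [hasDerivAt_iff_isLittleO]
    have hsum : (fun y => ∑ i ∈ S, ‖lam i y - lam i x - (y - x) • c‖)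
        =o[nhds x] (fun y => y - x) := by
      apply Asymptotics.IsLittleO.fun_sum
      intro i hi
      exact (hasDerivAt_iff_isLittleO.1 (hderivS i hi)).norm_left
    refine (Asymptotics.isBigO_of_le _ ?_).trans_isLittleO hsum
    intro y
    obtain ⟨j, hj, hjy⟩ := Finset.exists_mem_eq_sup' hSne (fun i => lam i y)
    rw [hsup'x, hjy]
    have h1 : ‖lam j y - M - (y - x) • c‖ = ‖lam j y - lam j x - (y - x) • c‖ := by
      rw [(hmemS j).1 hj]
    rw [h1]
    have h2 : ∀ i ∈ S, (0:ℝ) ≤ ‖lam i y - lam i x - (y - x) • c‖ :=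
      fun i _ => norm_nonneg _
    calc ‖lam j y - lam j x - (y - x) • c‖
        ≤ ∑ i ∈ S, ‖lam i y - lam i x - (y - x) • c‖ :=
          Finset.single_le_sum h2 hj
      _ ≤ ‖∑ i ∈ S, ‖lam i y - lam i x - (y - x) • c‖‖ := le_abs_self _
  exact hΛ ((hhas.congr_of_eventuallyEq (f₁ := fun y => ⨆ i, lam i y) heqv).differentiableAt)
end

section
/- Let Z be a standard multivariate normal vector in ℝ^q, let m ∈ ℝ^{q+1}, and let C be a (q+1)×q real matrix with pairwise distinct rows. Then almost surely the vector m + C Z has a unique maximal coordinate, i.e., the argmax over coordinates of (m + C Z)_i is a singleton almost surely. -/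
open ProbabilityTheory MeasureTheory

instance : MeasureTheory.NullSingletonClass (gaussianReal 0 1) :=
  ⟨fun x => (gaussianReal_absolutelyContinuous 0 one_ne_zero) (measure_singleton x)⟩

lemma hyperplane_null (q : ℕ) (c : Fin q → ℝ) (hc : c ≠ 0) (d : ℝ) :
    (Measure.pi fun _ : Fin q => gaussianReal 0 1) {z | ∑ k, c k * z k = d} = 0 := by
  obtain ⟨k₀, hk₀⟩ : ∃ k, c k ≠ 0 := by
    by_contra h
    push_neg at h
    exact hc (funext h)
  classical
  set μ : Measure ℝ := gaussianReal 0 1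
  set p : Fin q → Prop := fun k => k ≠ k₀ with hp
  set e := MeasurableEquiv.piEquivPiSubtypeProd (fun _ : Fin q => ℝ) p with he
  have hmp := measurePreserving_piEquivPiSubtypeProd (fun _ : Fin q => μ) p
  set S : Set (Fin q → ℝ) := {z | ∑ k, c k * z k = d} with hS
  have hmeas : MeasurableSet S := by
    have : Measurable fun z : Fin q → ℝ => ∑ k, c k * z k :=
      Finset.measurable_sum _ fun k _ => (measurable_pi_apply k).const_mul _
    exact this (measurableSet_singleton d)
  have hST : S = e ⁻¹' (e.symm ⁻¹' S) := by
    ext z; simp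
  rw [hST, hmp.measure_preimage (e.symm.measurable hmeas).nullMeasurableSet]
  rw [Measure.measure_prod_null (e.symm.measurable hmeas)]
  refine Filter.Eventually.of_forall fun x => ?_
  set i₀ : {k // ¬ p k} := ⟨k₀, not_not.2 rfl⟩ with hi₀
  refine measure_mono_null (t := {y : {k // ¬ p k} → ℝ | y i₀ =
      (d - ∑ k : Subtype p, c k.1 * x k) / c k₀}) ?_ ?_
  · intro y hy
    simp only [Set.mem_preimage, hS, Set.mem_setOf_eq, he,
      MeasurableEquiv.piEquivPiSubtypeProd, MeasurableEquiv.coe_mk,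
      Equiv.piEquivPiSubtypeProd_symm_apply] at hy
    set g : Fin q → ℝ := fun k => c k * (if h : p k then x ⟨k, h⟩ else y ⟨k, h⟩) with hg
    have h1 : ∑ k ∈ Finset.univ.filter p, g k = ∑ k : Subtype p, c k.1 * x k := by
      rw [Finset.sum_subtype (p := p) (Finset.univ.filter p) (fun k => by simp) g]
      exact Fintype.sum_congr _ _ fun k => by simp only [hg]; rw [dif_pos k.2]
    have h2 : ∑ k ∈ Finset.univ.filter (fun k => ¬ p k), g k = c k₀ * y i₀ := by
      have hfil : Finset.univ.filter (fun k => ¬ p k) = {k₀} := by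
        ext k; simp [hp]
      rw [hfil, Finset.sum_singleton]
      simp [hg, hp, hi₀]
    have hsplit : ∑ k, g k = (∑ k : Subtype p, c k.1 * x k) + c k₀ * y i₀ := by
      rw [← Finset.sum_filter_add_sum_filter_not Finset.univ p g, h1, h2]
    have hy' : (∑ k : Subtype p, c k.1 * x k) + c k₀ * y i₀ = d := by
      rw [← hsplit]; exact hy
    simp only [Set.mem_setOf_eq]
    rw [eq_div_iff hk₀]
    linarith
  · exact Measure.pi_hyperplane _ i₀ _

/-- If the rows of `C` are pairwise distinct, then almost surely (over a
standard multivariate normal `Z`) the vector `m + C Z` has a unique maximal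
coordinate. -/
theorem stmt7 (q : ℕ) (m : Fin (q + 1) → ℝ) (C : Fin (q + 1) → Fin q → ℝ)
    (hC : ∀ i j, i ≠ j → C i ≠ C j) :
    ∀ᵐ z ∂(Measure.pi fun _ : Fin q => gaussianReal 0 1),
      ∃! i : Fin (q + 1),
        ∀ j, m j + ∑ k, C j k * z k ≤ m i + ∑ k, C i k * z k := by
  have hnull : ∀ i j : Fin (q + 1), i ≠ j →
      (Measure.pi fun _ : Fin q => gaussianReal 0 1)
        {z | ∑ k, (C i k - C j k) * z k = m j - m i} = 0 := by
    intro i j hij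
    apply hyperplane_null
    intro h
    apply hC i j hij
    funext k
    have := congrFun h k
    simpa [sub_eq_zero] using this
  have : ∀ᵐ z ∂(Measure.pi fun _ : Fin q => gaussianReal 0 1),
      ∀ i j : Fin (q + 1), i ≠ j →
        ∑ k, (C i k - C j k) * z k ≠ m j - m i := by
    rw [MeasureTheory.ae_all_iff]
    intro i
    rw [MeasureTheory.ae_all_iff]
    intro j
    rcases eq_or_ne i j with rfl | hij
    · simp
    · have hmem : {z : Fin q → ℝ | ∑ k, (C i k - C j k) * z k = m j - m i}ᶜ ∈
          MeasureTheory.ae (Measure.pi fun _ : Fin q => gaussianReal 0 1) :=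
        compl_mem_ae_iff.2 (hnull i j hij)
      filter_upwards [hmem] with z h _
      exact h
  filter_upwards [this] with z hz
  set f : Fin (q + 1) → ℝ := fun i => m i + ∑ k, C i k * z k with hf
  have hinj : ∀ i j, f i = f j → i = j := by
    intro i j h
    by_contra hij
    apply hz i j hij
    have : ∑ k, (C i k - C j k) * z k = ∑ k, C i k * z k - ∑ k, C j k * z k := by
      rw [← Finset.sum_sub_distrib]
      congr 1; ext k; ring
    rw [this]
    simp only [hf] at h
    linarith
  obtain ⟨i, hi⟩ := Finite.exists_max f
  refine ⟨i, hi, fun j hj => hinj j i (le_antisymm (hi j) (hj i))⟩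
end
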